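/- Suppose φ satisfies the restricted isometry property with constant δ_{2s}(φ) < √2 − 1, and x is s-sparse. Then x is the unique solution to the ℓ₁-minimization problem: minimize ‖z‖₁ subject to φz = φx. -/

import Mathlib

noncomputable def l0 {N : ℕ} (x : Fin N → ℝ) : ℕ := Nat.card {i : Fin N // x i ≠ 0}


lemma l0_eq {N : ℕ} (z : Fin N → ℝ) :
    l0 z = (Finset.univ.filter (fun i => z i ≠ 0)).card := by
  simp [l0, Nat.card_eq_fintype_card, Fintype.card_subtype]

lemma l0_le_of_support {N : ℕ} {w : Fin N → ℝ} {S : Finset (Fin N)}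
    (h : ∀ i, w i ≠ 0 → i ∈ S) : l0 w ≤ S.card := by
  rw [l0_eq]
  exact Finset.card_le_card (fun i hi => h i (by simpa using hi))

lemma l0_add {N : ℕ} (u v : Fin N → ℝ) : l0 (u + v) ≤ l0 u + l0 v := by
  rw [l0_eq u, l0_eq v]
  refine le_trans (l0_le_of_support (S := Finset.univ.filter (fun i => u i ≠ 0) ∪ Finset.univ.filter (fun i => v i ≠ 0)) ?_) (Finset.card_union_le _ _)
  intro i hi
  simp only [Finset.mem_union, Finset.mem_filter, Finset.mem_univ, true_and]
  by_contra hc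
  push_neg at hc
  simp [Pi.add_apply, hc.1, hc.2] at hi

lemma l0_sub {N : ℕ} (u v : Fin N → ℝ) : l0 (u - v) ≤ l0 u + l0 v := by
  rw [l0_eq u, l0_eq v]
  refine le_trans (l0_le_of_support (S := Finset.univ.filter (fun i => u i ≠ 0) ∪ Finset.univ.filter (fun i => v i ≠ 0)) ?_) (Finset.card_union_le _ _)
  intro i hi
  simp only [Finset.mem_union, Finset.mem_filter, Finset.mem_univ, true_and]
  by_contra hc
  push_neg at hc
  simp [Pi.sub_apply, hc.1, hc.2] at hi

lemma l0_smul {N : ℕ} (c : ℝ) (u : Fin N → ℝ) : l0 (c • u) ≤ l0 u := by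
  rw [l0_eq u]
  refine l0_le_of_support (fun i hi => ?_)
  simp only [Finset.mem_filter, Finset.mem_univ, true_and]
  intro h0
  simp [Pi.smul_apply, h0] at hi


lemma card_val_lt_le' {N a b : ℕ} :
    (Finset.univ.filter (fun p : Fin N => a ≤ p.val ∧ p.val < b)).card ≤ b - a := by
  rw [← Nat.card_Ico a b]
  exact Finset.card_le_card_of_injOn Fin.val (by intro p hp; simpa using hp) (fun p _ q _ h => Fin.val_injective h)

lemma card_val_lt_eq' {N a b : ℕ} (hb : b ≤ N) :
    (Finset.univ.filter (fun p : Fin N => a ≤ p.val ∧ p.val < b)).card = b - a := by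
  rw [← Nat.card_Ico a b]
  refine Finset.card_nbij Fin.val (by intro p hp; simpa using hp) (fun p _ q _ h => Fin.val_injective h) ?_
  intro m hm
  simp only [Finset.coe_filter, Finset.mem_Ico, Finset.coe_Ico, Set.mem_Ico] at *
  exact ⟨⟨m, lt_of_lt_of_le hm.2 hb⟩, by simp [hm.1, hm.2], rfl⟩


lemma ip_basic {P N : ℕ} (φ : Matrix (Fin P) (Fin N) ℝ) (s : ℕ) (δ : ℝ)
    (hRIP : ∀ z : Fin N → ℝ, l0 z ≤ 2 * s →
      (1 - δ) * (∑ i, (z i) ^ 2) ≤ (∑ i, (φ.mulVec z i) ^ 2) ∧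
      (∑ i, (φ.mulVec z i) ^ 2) ≤ (1 + δ) * (∑ i, (z i) ^ 2))
    (u v : Fin N → ℝ) (hdisj : ∀ i, u i = 0 ∨ v i = 0)
    (hsp : l0 u + l0 v ≤ 2 * s) :
    |∑ i, φ.mulVec u i * φ.mulVec v i| ≤
      δ * ((∑ i, u i ^ 2) + (∑ i, v i ^ 2)) / 2 := by
  have hsum_add : (∑ i, (u + v) i ^ 2) = (∑ i, u i ^ 2) + (∑ i, v i ^ 2) := by
    rw [← Finset.sum_add_distrib]
    refine Finset.sum_congr rfl (fun i _ => ?_)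
    rcases hdisj i with h | h <;> simp [Pi.add_apply, h] <;> ring
  have hsum_sub : (∑ i, (u - v) i ^ 2) = (∑ i, u i ^ 2) + (∑ i, v i ^ 2) := by
    rw [← Finset.sum_add_distrib]
    refine Finset.sum_congr rfl (fun i _ => ?_)
    rcases hdisj i with h | h <;> simp [Pi.sub_apply, h] <;> ring
  have h1 := hRIP (u + v) (le_trans (l0_add u v) hsp)
  have h2 := hRIP (u - v) (le_trans (l0_sub u v) hsp)
  rw [hsum_add] at h1
  rw [hsum_sub] at h2
  have hpol : (∑ i, (φ.mulVec (u + v)) i ^ 2) - (∑ i, (φ.mulVec (u - v)) i ^ 2)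
      = 4 * ∑ i, φ.mulVec u i * φ.mulVec v i := by
    rw [Matrix.mulVec_add, Matrix.mulVec_sub, ← Finset.sum_sub_distrib, Finset.mul_sum]
    refine Finset.sum_congr rfl (fun i _ => ?_)
    simp [Pi.add_apply, Pi.sub_apply]
    ring
  rw [abs_le]
  constructor <;> nlinarith [h1.1, h1.2, h2.1, h2.2]

lemma ip_bound {P N : ℕ} (φ : Matrix (Fin P) (Fin N) ℝ) (s : ℕ) (δ : ℝ)
    (hδ0 : 0 ≤ δ)
    (hRIP : ∀ z : Fin N → ℝ, l0 z ≤ 2 * s →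
      (1 - δ) * (∑ i, (z i) ^ 2) ≤ (∑ i, (φ.mulVec z i) ^ 2) ∧
      (∑ i, (φ.mulVec z i) ^ 2) ≤ (1 + δ) * (∑ i, (z i) ^ 2))
    (u v : Fin N → ℝ) (hdisj : ∀ i, u i = 0 ∨ v i = 0)
    (hsp : l0 u + l0 v ≤ 2 * s) :
    |∑ i, φ.mulVec u i * φ.mulVec v i| ≤
      δ * Real.sqrt (∑ i, u i ^ 2) * Real.sqrt (∑ i, v i ^ 2) := by
  set U := ∑ i, u i ^ 2 with hU
  set V := ∑ i, v i ^ 2 with hV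
  have hUnn : 0 ≤ U := Finset.sum_nonneg (fun i _ => sq_nonneg _)
  have hVnn : 0 ≤ V := Finset.sum_nonneg (fun i _ => sq_nonneg _)
  rcases eq_or_lt_of_le hUnn with hU0 | hUpos
  · have hu0 : u = 0 := by
      funext i
      have := (Finset.sum_eq_zero_iff_of_nonneg (fun i _ => sq_nonneg (u i))).mp hU0.symm i (Finset.mem_univ i)
      exact pow_eq_zero_iff (n := 2) (by norm_num) |>.mp this
    simp only [hu0, Matrix.mulVec_zero, Pi.zero_apply, zero_mul, Finset.sum_const_zero, abs_zero]
    exact mul_nonneg (mul_nonneg hδ0 (Real.sqrt_nonneg _)) (Real.sqrt_nonneg _)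
  rcases eq_or_lt_of_le hVnn with hV0 | hVpos
  · have hv0 : v = 0 := by
      funext i
      have := (Finset.sum_eq_zero_iff_of_nonneg (fun i _ => sq_nonneg (v i))).mp hV0.symm i (Finset.mem_univ i)
      exact pow_eq_zero_iff (n := 2) (by norm_num) |>.mp this
    simp only [hv0, Matrix.mulVec_zero, Pi.zero_apply, mul_zero, Finset.sum_const_zero, abs_zero]
    exact mul_nonneg (mul_nonneg hδ0 (Real.sqrt_nonneg _)) (Real.sqrt_nonneg _)
  -- scale
  set t : ℝ := Real.sqrt (Real.sqrt V / Real.sqrt U) with ht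
  have hsU : 0 < Real.sqrt U := Real.sqrt_pos.mpr hUpos
  have hsV : 0 < Real.sqrt V := Real.sqrt_pos.mpr hVpos
  have htpos : 0 < t := Real.sqrt_pos.mpr (by positivity)
  have ht2 : t ^ 2 = Real.sqrt V / Real.sqrt U := Real.sq_sqrt (by positivity)
  have hdisj' : ∀ i, (t • u) i = 0 ∨ (t⁻¹ • v) i = 0 := by
    intro i
    rcases hdisj i with h | h <;> simp [h]
  have hsp' : l0 (t • u) + l0 (t⁻¹ • v) ≤ 2 * s :=
    le_trans (add_le_add (l0_smul t u) (l0_smul t⁻¹ v)) hsp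
  have key := ip_basic φ s δ hRIP (t • u) (t⁻¹ • v) hdisj' hsp'
  have hmv1 : φ.mulVec (t • u) = t • φ.mulVec u := by
    rw [Matrix.mulVec_smul]
  have hmv2 : φ.mulVec (t⁻¹ • v) = t⁻¹ • φ.mulVec v := by
    rw [Matrix.mulVec_smul]
  have hip : ∑ i, φ.mulVec (t • u) i * φ.mulVec (t⁻¹ • v) i
      = ∑ i, φ.mulVec u i * φ.mulVec v i := by
    rw [hmv1, hmv2]
    refine Finset.sum_congr rfl (fun i _ => ?_)
    simp [Pi.smul_apply, smul_eq_mul]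
    field_simp
  have hsq1 : (∑ i, ((t • u) i) ^ 2) = t ^ 2 * U := by
    rw [hU, Finset.mul_sum]
    refine Finset.sum_congr rfl (fun i _ => ?_)
    simp [Pi.smul_apply, smul_eq_mul]; ring
  have hsq2 : (∑ i, ((t⁻¹ • v) i) ^ 2) = (t ^ 2)⁻¹ * V := by
    rw [hV, Finset.mul_sum]
    refine Finset.sum_congr rfl (fun i _ => ?_)
    simp [Pi.smul_apply, smul_eq_mul]; ring
  rw [hip, hsq1, hsq2, ht2] at key
  have hUU : Real.sqrt U * Real.sqrt U = U := Real.mul_self_sqrt hUnn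
  have hVV : Real.sqrt V * Real.sqrt V = V := Real.mul_self_sqrt hVnn
  have : Real.sqrt V / Real.sqrt U * U + (Real.sqrt V / Real.sqrt U)⁻¹ * V
      = 2 * (Real.sqrt U * Real.sqrt V) := by
    field_simp
    nlinarith [hUU, hVV]
  rw [this] at key
  calc |∑ i, φ.mulVec u i * φ.mulVec v i| ≤ δ * (2 * (Real.sqrt U * Real.sqrt V)) / 2 := key
    _ = δ * Real.sqrt U * Real.sqrt V := by ring

set_option maxHeartbeats 2000000 in
lemma rip_key {P N : ℕ} (φ : Matrix (Fin P) (Fin N) ℝ) (s : ℕ) (δ : ℝ)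
    (hδ0 : 0 ≤ δ) (hδ1 : δ < 1) (hs : 1 ≤ s)
    (hRIP : ∀ z : Fin N → ℝ, l0 z ≤ 2 * s →
      (1 - δ) * (∑ i, (z i) ^ 2) ≤ (∑ i, (φ.mulVec z i) ^ 2) ∧
      (∑ i, (φ.mulVec z i) ^ 2) ≤ (1 + δ) * (∑ i, (z i) ^ 2))
    (x : Fin N → ℝ) (hx : l0 x ≤ s) (h : Fin N → ℝ) (hker : φ.mulVec h = 0) :
    ∑ i ∈ Finset.univ.filter (fun i => x i ≠ 0), |h i| ≤
      (Real.sqrt 2 * δ / (1 - δ)) * ∑ i ∈ Finset.univ.filter (fun i => x i = 0), |h i| := by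
  classical
  rcases Nat.eq_zero_or_pos N with rfl | hN
  · simp
  set T : Finset (Fin N) := Finset.univ.filter (fun i => x i ≠ 0) with hT
  set k := T.card with hkdef
  have hk : k ≤ s := by rw [l0_eq] at hx; exact hx
  set M : ℝ := 1 + ∑ i, |h i| with hMdef
  have hM : ∀ i, |h i| < M := by
    intro i
    have h1 : |h i| ≤ ∑ j, |h j| :=
      Finset.single_le_sum (fun j _ => abs_nonneg (h j)) (Finset.mem_univ i)
    rw [hMdef]; linarith
  set f : Fin N → ℝ := fun i => if x i ≠ 0 then -M else -|h i| with hfdef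
  set σ : Equiv.Perm (Fin N) := Tuple.sort f with hσdef
  have hmono : Monotone (f ∘ σ) := Tuple.monotone_sort f
  have hflb : ∀ i, -M ≤ f i := by
    intro i
    rw [hfdef]
    by_cases hxi : x i ≠ 0 <;> simp [hxi]
    · exact le_of_lt (by linarith [hM i])
  have hfM : ∀ i, f i = -M ↔ x i ≠ 0 := by
    intro i
    rw [hfdef]
    by_cases hxi : x i ≠ 0 <;> simp [hxi]
    intro he
    have := hM i
    linarith
  have hcard_pos : (Finset.univ.filter (fun p : Fin N => x (σ p) ≠ 0)).card = k := by
    rw [hkdef, hT]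
    refine Finset.card_nbij σ (by intro p hp; simpa using hp) (fun p _ q _ hpq => σ.injective hpq) ?_
    intro i hi
    simp only [Finset.coe_filter, Finset.mem_univ, true_and, Set.mem_setOf_eq] at *
    exact ⟨σ.symm i, by simpa using hi, by simp⟩
  have hpos : ∀ p : Fin N, x (σ p) ≠ 0 ↔ p.val < k := by
    intro p
    constructor
    · intro hp
      by_contra hc
      push_neg at hc
      have hsub : Finset.Iic p ⊆ Finset.univ.filter (fun q : Fin N => x (σ q) ≠ 0) := by
        intro q hq
        simp only [Finset.mem_Iic] at hq
        have h1 : f (σ q) ≤ f (σ p) := hmono hq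
        have h2 : f (σ p) = -M := (hfM _).mpr hp
        have h3 : f (σ q) = -M := le_antisymm (h2 ▸ h1) (hflb _)
        simp only [Finset.mem_filter, Finset.mem_univ, true_and]
        exact (hfM _).mp h3
      have hcard := Finset.card_le_card hsub
      rw [hcard_pos] at hcard
      rw [Fin.card_Iic] at hcard
      omega
    · intro hp
      by_contra hc
      have hsub : (Finset.univ.filter (fun q : Fin N => x (σ q) ≠ 0)) ⊆ Finset.Iio p := by
        intro q hq
        simp only [Finset.mem_filter, Finset.mem_univ, true_and] at hq
        simp only [Finset.mem_Iio]
        by_contra hqp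
        push_neg at hqp
        have h1 : f (σ p) ≤ f (σ q) := hmono hqp
        have h2 : f (σ q) = -M := (hfM _).mpr hq
        have h3 : f (σ p) = -M := le_antisymm (h2 ▸ h1) (hflb _)
        exact (hfM _).mp h3 hc
      have hcard := Finset.card_le_card hsub
      rw [hcard_pos, Fin.card_Iio] at hcard
      omega
  have hanti : ∀ p q : Fin N, k ≤ p.val → p ≤ q → |h (σ q)| ≤ |h (σ p)| := by
    intro p q hkp hpq
    have hxp : ¬ x (σ p) ≠ 0 := by
      rw [hpos p]; omega
    have hxq : ¬ x (σ q) ≠ 0 := by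
      rw [hpos q]; omega
    have h1 : f (σ p) ≤ f (σ q) := hmono hpq
    rw [hfdef] at h1
    simp only [hxp, hxq, if_neg, ite_false] at h1
    linarith
  set blk : Fin N → ℕ := fun p => if p.val < k then 0 else (p.val - k) / s + 1 with hblkdef
  set u : ℕ → Fin N → ℝ := fun j i => if blk (σ.symm i) = j then h i else 0 with hudef
  have hspos : 0 < s := hs
  have hblk0 : ∀ p : Fin N, blk p = 0 ↔ p.val < k := by
    intro p
    by_cases hp : p.val < k <;> simp [hblkdef, hp]
  have hblkm : ∀ (m : ℕ) (p : Fin N),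
      blk p = m + 1 ↔ k + m * s ≤ p.val ∧ p.val < k + (m + 1) * s := by
    intro m p
    have e1 : m ≤ (p.val - k) / s ↔ m * s ≤ p.val - k := Nat.le_div_iff_mul_le hspos
    have e2 : (p.val - k) / s < m + 1 ↔ p.val - k < (m + 1) * s := Nat.div_lt_iff_lt_mul hspos
    by_cases hp : p.val < k <;> simp [hblkdef, hp] <;> omega
  have hblk_le : ∀ p : Fin N, blk p ≤ N := by
    intro p
    have h1 := Nat.div_le_self (p.val - k) s
    have h2 := p.isLt
    by_cases hp : p.val < k <;> simp [hblkdef, hp] <;> omega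
  have hresum : ∀ (F : ℝ → ℝ), F 0 = 0 → ∀ j, (∑ i, F (u j i)) =
      ∑ p ∈ Finset.univ.filter (fun p => blk p = j), F (h (σ p)) := by
    intro F hF j
    rw [← Equiv.sum_comp σ (fun i => F (u j i)), Finset.sum_filter]
    refine Finset.sum_congr rfl (fun p _ => ?_)
    simp only [hudef, Equiv.symm_apply_apply]
    by_cases hb : blk p = j <;> simp [hb, hF]
  set a : ℕ → ℝ := fun j => Real.sqrt (∑ i, (u j i) ^ 2) with hadef
  set b : ℕ → ℝ := fun j => ∑ i, |u j i| with hbdef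
  have hbnn : ∀ j, 0 ≤ b j := fun j => Finset.sum_nonneg (fun i _ => abs_nonneg _)
  have hann : ∀ j, 0 ≤ a j := fun j => Real.sqrt_nonneg _
  have hb0 : b 0 = ∑ i ∈ T, |h i| := by
    rw [hbdef, hT, Finset.sum_filter]
    refine Finset.sum_congr rfl (fun i _ => ?_)
    have hiff : blk (σ.symm i) = 0 ↔ x i ≠ 0 := by
      rw [hblk0, ← hpos (σ.symm i)]
      simp
    by_cases hxi : x i ≠ 0
    · simp only [hudef, hiff.mpr hxi, if_pos, ite_true, hxi]
      simp [hxi]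
    · have : ¬ blk (σ.symm i) = 0 := fun hcon => hxi (hiff.mp hcon)
      simp [hudef, this, hxi]
  have htotal : ∑ j ∈ Finset.range (N + 1), b j = ∑ i, |h i| := by
    simp only [hbdef]
    rw [Finset.sum_comm]
    refine Finset.sum_congr rfl (fun i _ => ?_)
    have : ∀ j, |u j i| = if blk (σ.symm i) = j then |h i| else 0 := by
      intro j
      simp only [hudef]
      by_cases hb : blk (σ.symm i) = j <;> simp [hb]
    simp only [this]
    rw [Finset.sum_ite_eq (Finset.range (N + 1)) (blk (σ.symm i)) (fun _ => |h i|)]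
    simp [Nat.lt_succ_iff, hblk_le]
  have hcompl : ∑ j ∈ Finset.Icc 1 N, b j = ∑ i ∈ Finset.univ.filter (fun i => x i = 0), |h i| := by
    have hsplit : Finset.range (N + 1) = insert 0 (Finset.Icc 1 N) := by
      ext m
      simp [Nat.lt_succ_iff]
      omega
    have h1 : ∑ j ∈ Finset.range (N + 1), b j = b 0 + ∑ j ∈ Finset.Icc 1 N, b j := by
      rw [hsplit, Finset.sum_insert (by simp)]
    have h2 : (∑ i ∈ T, |h i|) + ∑ i ∈ Finset.univ.filter (fun i => x i = 0), |h i|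
        = ∑ i, |h i| := by
      rw [hT]
      rw [← Finset.sum_filter_add_sum_filter_not Finset.univ (fun i => x i ≠ 0) (fun i => |h i|)]
      congr 1
      apply Finset.sum_congr _ (fun _ _ => rfl)
      apply Finset.filter_congr
      intro i _
      simp
    rw [htotal, hb0] at h1
    linarith
  -- cardinality of blocks via positions
  have hcard_uj : ∀ j, (Finset.univ.filter (fun i => blk (σ.symm i) = j)).card
      = (Finset.univ.filter (fun p : Fin N => blk p = j)).card := by
    intro j
    refine Finset.card_nbij σ.symm (by intro p hp; simpa using hp) (fun p _ q _ hpq => σ.symm.injective hpq) ?_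
    intro p hp
    simp only [Finset.coe_filter, Finset.mem_univ, true_and, Set.mem_setOf_eq] at *
    exact ⟨σ p, by simpa using hp, by simp⟩
  have hl0u0 : l0 (u 0) ≤ k := by
    refine le_trans (l0_le_of_support (S := Finset.univ.filter (fun i => blk (σ.symm i) = 0))
      (fun i hi => ?_)) ?_
    · simp only [Finset.mem_filter, Finset.mem_univ, true_and]
      by_contra hb
      simp [hudef, hb] at hi
    · rw [hcard_uj]
      calc (Finset.univ.filter (fun p : Fin N => blk p = 0)).card
          = (Finset.univ.filter (fun p : Fin N => 0 ≤ p.val ∧ p.val < k)).card := by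
            apply Finset.card_nbij id (fun p hp => ?_) (fun p _ q _ h => h) (fun p hp => ?_)
            · simp only [Finset.coe_filter, Finset.mem_filter, Finset.mem_univ, true_and, Set.mem_setOf_eq] at *
              rw [hblk0] at hp
              exact ⟨Nat.zero_le _, hp⟩
            · simp only [Finset.coe_filter, Finset.mem_univ, true_and, Set.mem_setOf_eq] at *
              exact ⟨p, (hblk0 p).mpr hp.2, rfl⟩
        _ ≤ k - 0 := card_val_lt_le'
        _ = k := by omega
  have hl0um : ∀ m : ℕ, l0 (u (m + 1)) ≤ s := by
    intro m
    refine le_trans (l0_le_of_support (S := Finset.univ.filter (fun i => blk (σ.symm i) = m + 1))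
      (fun i hi => ?_)) ?_
    · simp only [Finset.mem_filter, Finset.mem_univ, true_and]
      by_contra hb
      simp [hudef, hb] at hi
    · rw [hcard_uj]
      calc (Finset.univ.filter (fun p : Fin N => blk p = m + 1)).card
          = (Finset.univ.filter (fun p : Fin N => k + m * s ≤ p.val ∧ p.val < k + (m + 1) * s)).card := by
            apply Finset.card_nbij id (fun p hp => ?_) (fun p _ q _ h => h) (fun p hp => ?_)
            · simp only [Finset.coe_filter, Finset.mem_filter, Finset.mem_univ, true_and, Set.mem_setOf_eq] at *
              exact (hblkm m p).mp hp
            · simp only [Finset.coe_filter, Finset.mem_univ, true_and, Set.mem_setOf_eq] at *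
              exact ⟨p, (hblkm m p).mpr hp, rfl⟩
        _ ≤ (k + (m + 1) * s) - (k + m * s) := card_val_lt_le'
        _ ≤ s := by
            have hms : (m + 1) * s = m * s + s := by ring
            omega
  have hP2 : ∀ m : ℕ, 1 ≤ m → a (m + 1) ≤ b m / Real.sqrt s := by
    intro m hm
    have hsq : Real.sqrt s > 0 := Real.sqrt_pos.mpr (by exact_mod_cast hspos)
    have hsum2 : (∑ i, (u (m + 1) i) ^ 2)
        = ∑ p ∈ Finset.univ.filter (fun p => blk p = m + 1), (h (σ p)) ^ 2 :=
      hresum (fun t => t ^ 2) (by norm_num) (m + 1)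
    rcases Finset.eq_empty_or_nonempty (Finset.univ.filter (fun p : Fin N => blk p = m + 1)) with
      he | ⟨p₀, hp₀⟩
    · have : a (m + 1) = 0 := by
        rw [hadef]
        simp only [hsum2, he, Finset.sum_empty, Real.sqrt_zero]
      rw [this]
      positivity
    · simp only [Finset.mem_filter, Finset.mem_univ, true_and] at hp₀
      obtain ⟨m', rfl⟩ : ∃ m', m = m' + 1 := ⟨m - 1, by omega⟩
      have hp₀b := (hblkm (m' + 1) p₀).mp hp₀
      have hNbig : k + (m' + 1) * s ≤ N := le_trans hp₀b.1 (le_of_lt p₀.isLt)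
      -- block m'+1 is full, card = s
      have hfull : (Finset.univ.filter (fun p : Fin N => blk p = m' + 1)).card = s := by
        calc (Finset.univ.filter (fun p : Fin N => blk p = m' + 1)).card
            = (Finset.univ.filter (fun p : Fin N => k + m' * s ≤ p.val ∧ p.val < k + (m' + 1) * s)).card := by
              apply Finset.card_nbij id (fun p hp => ?_) (fun p _ q _ hh => hh) (fun p hp => ?_)
              · simp only [Finset.coe_filter, Finset.mem_filter, Finset.mem_univ, true_and, Set.mem_setOf_eq] at *
                exact (hblkm m' p).mp hp
              · simp only [Finset.coe_filter, Finset.mem_univ, true_and, Set.mem_setOf_eq] at *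
                exact ⟨p, (hblkm m' p).mpr hp, rfl⟩
          _ = (k + (m' + 1) * s) - (k + m' * s) := card_val_lt_eq' hNbig
          _ = s := by
              have hms : (m' + 1) * s = m' * s + s := by ring
              omega
      -- each element of block m'+2 bounded
      have hel : ∀ p : Fin N, blk p = (m' + 1) + 1 → |h (σ p)| ≤ b (m' + 1) / s := by
        intro p hp
        have hpb := (hblkm (m' + 1) p).mp hp
        have hq : ∀ q ∈ Finset.univ.filter (fun q : Fin N => blk q = m' + 1),
            |h (σ p)| ≤ |h (σ q)| := by
          intro q hqmem
          simp only [Finset.mem_filter, Finset.mem_univ, true_and] at hqmem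
          have hqb := (hblkm m' q).mp hqmem
          refine hanti q p (by omega) ?_
          have : q.val ≤ p.val := by omega
          exact this
        have hsum : (s : ℝ) * |h (σ p)| ≤ b (m' + 1) := by
          have hb' : b (m' + 1) = ∑ q ∈ Finset.univ.filter (fun q : Fin N => blk q = m' + 1),
              |h (σ q)| := by
            rw [hbdef]
            exact hresum (fun t => |t|) abs_zero (m' + 1)
          rw [hb']
          calc (s : ℝ) * |h (σ p)|
              = ∑ _q ∈ Finset.univ.filter (fun q : Fin N => blk q = m' + 1), |h (σ p)| := by
                rw [Finset.sum_const, hfull, nsmul_eq_mul]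
            _ ≤ _ := Finset.sum_le_sum hq
        rw [le_div_iff₀ (by exact_mod_cast hspos)]
        linarith
      have hcardle : ((Finset.univ.filter (fun p : Fin N => blk p = (m' + 1) + 1)).card : ℝ) ≤ s := by
        have : (Finset.univ.filter (fun p : Fin N => blk p = (m' + 1) + 1)).card ≤ s := by
          calc (Finset.univ.filter (fun p : Fin N => blk p = (m' + 1) + 1)).card
              = (Finset.univ.filter (fun p : Fin N =>
                  k + (m' + 1) * s ≤ p.val ∧ p.val < k + ((m' + 1) + 1) * s)).card := by
                apply Finset.card_nbij id (fun p hp => ?_) (fun p _ q _ hh => hh) (fun p hp => ?_)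
                · simp only [Finset.coe_filter, Finset.mem_filter, Finset.mem_univ, true_and, Set.mem_setOf_eq] at *
                  exact (hblkm (m' + 1) p).mp hp
                · simp only [Finset.coe_filter, Finset.mem_univ, true_and, Set.mem_setOf_eq] at *
                  exact ⟨p, (hblkm (m' + 1) p).mpr hp, rfl⟩
            _ ≤ (k + ((m' + 1) + 1) * s) - (k + (m' + 1) * s) := card_val_lt_le'
            _ ≤ s := by
                have hms : ((m' + 1) + 1) * s = (m' + 1) * s + s := by ring
                omega
        exact_mod_cast this
      have hsumsq : (∑ i, (u ((m' + 1) + 1) i) ^ 2) ≤ (b (m' + 1)) ^ 2 / s := by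
        rw [hsum2]
        have hstep : ∑ p ∈ Finset.univ.filter (fun p : Fin N => blk p = (m' + 1) + 1), (h (σ p)) ^ 2
            ≤ ∑ _p ∈ Finset.univ.filter (fun p : Fin N => blk p = (m' + 1) + 1), (b (m' + 1) / s) ^ 2 := by
          refine Finset.sum_le_sum (fun p hp => ?_)
          simp only [Finset.mem_filter, Finset.mem_univ, true_and] at hp
          have h1 := hel p hp
          calc (h (σ p)) ^ 2 = |h (σ p)| ^ 2 := (sq_abs _).symm
            _ ≤ (b (m' + 1) / s) ^ 2 := by
                apply pow_le_pow_left₀ (abs_nonneg _) h1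
        rw [Finset.sum_const, nsmul_eq_mul] at hstep
        refine le_trans hstep ?_
        have hbnn' := hbnn (m' + 1)
        have hs' : (0:ℝ) < s := by exact_mod_cast hspos
        calc ((Finset.univ.filter (fun p : Fin N => blk p = (m' + 1) + 1)).card : ℝ) * (b (m' + 1) / s) ^ 2
            ≤ (s : ℝ) * (b (m' + 1) / s) ^ 2 := by
              apply mul_le_mul_of_nonneg_right hcardle (by positivity)
          _ = (b (m' + 1)) ^ 2 / s := by
              field_simp
      rw [hadef]
      have hs' : (0:ℝ) < s := by exact_mod_cast hspos
      calc Real.sqrt (∑ i, (u ((m' + 1) + 1) i) ^ 2) ≤ Real.sqrt ((b (m' + 1)) ^ 2 / s) :=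
            Real.sqrt_le_sqrt hsumsq
        _ = b (m' + 1) / Real.sqrt s := by
            rw [Real.sqrt_div (sq_nonneg _), Real.sqrt_sq (hbnn (m' + 1))]
  have hsq : (0:ℝ) < Real.sqrt s := Real.sqrt_pos.mpr (by exact_mod_cast hspos)
  have hA2 : ∑ j ∈ Finset.Icc 2 N, a j ≤ (∑ j ∈ Finset.Icc 1 N, b j) / Real.sqrt s := by
    have h1 : ∑ j ∈ Finset.Icc 2 N, a j ≤ ∑ j ∈ Finset.Icc 2 N, b (j - 1) / Real.sqrt s := by
      refine Finset.sum_le_sum (fun j hj => ?_)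
      simp only [Finset.mem_Icc] at hj
      have : j = (j - 1) + 1 := by omega
      rw [this]
      have : (j - 1) + 1 - 1 = j - 1 := by omega
      rw [this]
      exact hP2 (j - 1) (by omega)
    have h2 : ∑ j ∈ Finset.Icc 2 N, b (j - 1) = ∑ j ∈ Finset.Icc 1 (N - 1), b j := by
      refine Finset.sum_nbij' (fun j => j - 1) (fun j => j + 1) ?_ ?_ ?_ ?_ ?_
      · intro j hj; simp only [Finset.mem_Icc] at *; omega
      · intro j hj; simp only [Finset.mem_Icc] at *; omega
      · intro j hj; simp only [Finset.mem_Icc] at hj; omega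
      · intro j hj; simp only [Finset.mem_Icc] at hj; omega
      · intro j hj; rfl
    have h3 : ∑ j ∈ Finset.Icc 1 (N - 1), b j ≤ ∑ j ∈ Finset.Icc 1 N, b j := by
      refine Finset.sum_le_sum_of_subset_of_nonneg ?_ (fun j _ _ => hbnn j)
      intro j hj
      simp only [Finset.mem_Icc] at *
      omega
    calc ∑ j ∈ Finset.Icc 2 N, a j ≤ ∑ j ∈ Finset.Icc 2 N, b (j - 1) / Real.sqrt s := h1
      _ = (∑ j ∈ Finset.Icc 2 N, b (j - 1)) / Real.sqrt s := by rw [Finset.sum_div]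
      _ ≤ (∑ j ∈ Finset.Icc 1 N, b j) / Real.sqrt s := by
          rw [← h2] at h3
          exact (div_le_div_iff_of_pos_right hsq).mpr h3
  have ha_eq : ∀ j, Real.sqrt (∑ i, (u j i) ^ 2) = a j := fun j => rfl
  have hl0uj : ∀ j : ℕ, 1 ≤ j → l0 (u j) ≤ s := by
    intro j hj
    have e : j = (j - 1) + 1 := by omega
    rw [e]
    exact hl0um (j - 1)
  set w : Fin N → ℝ := u 0 + u 1 with hwdef
  have hdisj_ne : ∀ j j' : ℕ, j ≠ j' → ∀ i, u j i = 0 ∨ u j' i = 0 := by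
    intro j j' hne i
    by_cases hb : blk (σ.symm i) = j
    · right
      have hb' : blk (σ.symm i) ≠ j' := by rw [hb]; exact hne
      simp [hudef, hb']
    · left
      simp [hudef, hb]
  have hl0w : l0 w ≤ 2 * s := by
    have h3 : l0 (u 0 + u 1) ≤ l0 (u 0) + l0 (u 1) := l0_add _ _
    rw [← hwdef] at h3
    have h1 := hl0u0
    have h2 : l0 (u 1) ≤ s := by simpa using hl0um 0
    omega
  have hsum_u : ∑ j ∈ Finset.range (N + 1), u j = h := by
    funext i
    rw [Finset.sum_apply]
    have he : ∀ j, u j i = if blk (σ.symm i) = j then h i else 0 := fun j => rfl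
    simp only [he]
    rw [Finset.sum_ite_eq (Finset.range (N + 1)) (blk (σ.symm i)) (fun _ => h i)]
    simp [Nat.lt_succ_iff, hblk_le]
  have hNsplit : Finset.range (N + 1) = insert 0 (insert 1 (Finset.Icc 2 N)) := by
    ext m
    simp only [Finset.mem_range, Finset.mem_insert, Finset.mem_Icc, Nat.lt_succ_iff]
    omega
  have hmv_sum : ∀ (S : Finset ℕ), φ.mulVec (∑ j ∈ S, u j) = ∑ j ∈ S, φ.mulVec (u j) := by
    intro S
    exact map_sum φ.mulVecLin u S
  have h0 : φ.mulVec w + ∑ j ∈ Finset.Icc 2 N, φ.mulVec (u j) = 0 := by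
    have h1 : (0 : Fin P → ℝ) = φ.mulVec (u 0) + (φ.mulVec (u 1)
        + ∑ j ∈ Finset.Icc 2 N, φ.mulVec (u j)) := by
      rw [← hker, ← hsum_u, hmv_sum, hNsplit, Finset.sum_insert (by simp),
        Finset.sum_insert (by simp)]
    rw [hwdef, Matrix.mulVec_add]
    calc φ.mulVec (u 0) + φ.mulVec (u 1) + ∑ j ∈ Finset.Icc 2 N, φ.mulVec (u j)
        = φ.mulVec (u 0) + (φ.mulVec (u 1) + ∑ j ∈ Finset.Icc 2 N, φ.mulVec (u j)) := by
          rw [add_assoc]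
      _ = 0 := h1.symm
  set W := ∑ i, (w i) ^ 2 with hWdef
  have hu0nn : (0:ℝ) ≤ ∑ i, (u 0 i) ^ 2 := Finset.sum_nonneg (fun i _ => sq_nonneg _)
  have hu1nn : (0:ℝ) ≤ ∑ i, (u 1 i) ^ 2 := Finset.sum_nonneg (fun i _ => sq_nonneg _)
  have hW : W = (∑ i, (u 0 i) ^ 2) + (∑ i, (u 1 i) ^ 2) := by
    rw [hWdef, ← Finset.sum_add_distrib]
    refine Finset.sum_congr rfl (fun i _ => ?_)
    rcases hdisj_ne 0 1 (by norm_num) i with h' | h' <;>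
      simp [hwdef, Pi.add_apply, h']
  have hWnn : 0 ≤ W := by rw [hW]; positivity
  set wn := Real.sqrt W with hwndef
  have hwnsq : wn ^ 2 = W := Real.sq_sqrt hWnn
  have ha0sq : a 0 ^ 2 = ∑ i, (u 0 i) ^ 2 := by rw [← ha_eq 0]; exact Real.sq_sqrt hu0nn
  have ha1sq : a 1 ^ 2 = ∑ i, (u 1 i) ^ 2 := by rw [← ha_eq 1]; exact Real.sq_sqrt hu1nn
  have ha0w : a 0 ≤ wn := by
    rw [← ha_eq 0, hwndef]
    apply Real.sqrt_le_sqrt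
    rw [hW]
    linarith
  have ha01 : a 0 + a 1 ≤ Real.sqrt 2 * wn := by
    have h1 : (a 0 + a 1) ^ 2 ≤ 2 * W := by
      nlinarith [sq_nonneg (a 0 - a 1), ha0sq, ha1sq, hW]
    have h2 : a 0 + a 1 = Real.sqrt ((a 0 + a 1) ^ 2) := by
      rw [Real.sqrt_sq (by positivity)]
    rw [h2, hwndef]
    calc Real.sqrt ((a 0 + a 1) ^ 2) ≤ Real.sqrt (2 * W) := Real.sqrt_le_sqrt h1
      _ = Real.sqrt 2 * Real.sqrt W := Real.sqrt_mul (by norm_num) W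
  set A2 := ∑ j ∈ Finset.Icc 2 N, a j with hA2def
  have hA2nn : 0 ≤ A2 := Finset.sum_nonneg (fun j _ => hann j)
  have hIP : ∀ j ∈ Finset.Icc 2 N, |∑ i, φ.mulVec w i * φ.mulVec (u j) i|
      ≤ δ * (a 0 + a 1) * a j := by
    intro j hj
    simp only [Finset.mem_Icc] at hj
    have hsp0 : l0 (u 0) + l0 (u j) ≤ 2 * s := by
      have h1 := hl0u0
      have h2 := hl0uj j (by omega)
      omega
    have hsp1 : l0 (u 1) + l0 (u j) ≤ 2 * s := by
      have h1 := hl0uj 1 le_rfl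
      have h2 := hl0uj j (by omega)
      omega
    have hb0j := ip_bound φ s δ hδ0 hRIP (u 0) (u j) (hdisj_ne 0 j (by omega)) hsp0
    have hb1j := ip_bound φ s δ hδ0 hRIP (u 1) (u j) (hdisj_ne 1 j (by omega)) hsp1
    rw [ha_eq, ha_eq] at hb0j
    rw [ha_eq, ha_eq] at hb1j
    have hsplit_inner : ∑ i, φ.mulVec w i * φ.mulVec (u j) i
        = (∑ i, φ.mulVec (u 0) i * φ.mulVec (u j) i)
          + (∑ i, φ.mulVec (u 1) i * φ.mulVec (u j) i) := by
      rw [hwdef, Matrix.mulVec_add, ← Finset.sum_add_distrib]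
      refine Finset.sum_congr rfl (fun i _ => ?_)
      simp only [Pi.add_apply]
      ring
    calc |∑ i, φ.mulVec w i * φ.mulVec (u j) i|
        ≤ |∑ i, φ.mulVec (u 0) i * φ.mulVec (u j) i|
          + |∑ i, φ.mulVec (u 1) i * φ.mulVec (u j) i| := by
          rw [hsplit_inner]; exact abs_add_le _ _
      _ ≤ δ * a 0 * a j + δ * a 1 * a j := add_le_add hb0j hb1j
      _ = δ * (a 0 + a 1) * a j := by ring
  have hchain : ∑ i, (φ.mulVec w i) ^ 2 ≤ δ * (a 0 + a 1) * A2 := by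
    have hw_eq : ∀ i, φ.mulVec w i = - ∑ j ∈ Finset.Icc 2 N, φ.mulVec (u j) i := by
      intro i
      have hc := congrFun h0 i
      simp only [Pi.add_apply, Pi.zero_apply, Finset.sum_apply] at hc
      linarith
    have hstep1 : ∑ i, (φ.mulVec w i) ^ 2
        = - ∑ j ∈ Finset.Icc 2 N, ∑ i, φ.mulVec w i * φ.mulVec (u j) i := by
      have hper : ∀ i, (φ.mulVec w i) ^ 2
          = - ∑ j ∈ Finset.Icc 2 N, φ.mulVec w i * φ.mulVec (u j) i := by
        intro i
        have hwe := hw_eq i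
        calc (φ.mulVec w i) ^ 2 = φ.mulVec w i * φ.mulVec w i := by ring
          _ = φ.mulVec w i * (- ∑ j ∈ Finset.Icc 2 N, φ.mulVec (u j) i) := by rw [← hwe]
          _ = - ∑ j ∈ Finset.Icc 2 N, φ.mulVec w i * φ.mulVec (u j) i := by
              rw [mul_neg, Finset.mul_sum]
      calc ∑ i, (φ.mulVec w i) ^ 2
          = ∑ i, - ∑ j ∈ Finset.Icc 2 N, φ.mulVec w i * φ.mulVec (u j) i :=
            Finset.sum_congr rfl (fun i _ => hper i)
        _ = - ∑ i, ∑ j ∈ Finset.Icc 2 N, φ.mulVec w i * φ.mulVec (u j) i := by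
            rw [← Finset.sum_neg_distrib]
        _ = - ∑ j ∈ Finset.Icc 2 N, ∑ i, φ.mulVec w i * φ.mulVec (u j) i := by
            rw [Finset.sum_comm]
    rw [hstep1]
    have habs : - ∑ j ∈ Finset.Icc 2 N, (∑ i, φ.mulVec w i * φ.mulVec (u j) i)
        ≤ ∑ j ∈ Finset.Icc 2 N, |∑ i, φ.mulVec w i * φ.mulVec (u j) i| := by
      rw [← Finset.sum_neg_distrib]
      exact Finset.sum_le_sum (fun j _ => neg_le_abs _)
    refine le_trans habs (le_trans (Finset.sum_le_sum hIP) ?_)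
    rw [hA2def, Finset.mul_sum]
  have hlow := (hRIP w hl0w).1
  have hδ1' : 0 < 1 - δ := by linarith
  have hb0a : b 0 ≤ Real.sqrt s * a 0 := by
    have hcs := Finset.sum_mul_sq_le_sq_mul_sq Finset.univ
      (fun i => if u 0 i ≠ 0 then (1:ℝ) else 0) (fun i => |u 0 i|)
    have h1 : ∑ i, (if u 0 i ≠ 0 then (1:ℝ) else 0) * |u 0 i| = b 0 := by
      rw [hbdef]
      refine Finset.sum_congr rfl (fun i _ => ?_)
      by_cases hz : u 0 i = 0 <;> simp [hz]
    have h2 : ∑ i, ((if u 0 i ≠ 0 then (1:ℝ) else 0)) ^ 2 = (l0 (u 0) : ℝ) := by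
      rw [l0_eq, Finset.card_filter]
      push_cast
      refine Finset.sum_congr rfl (fun i _ => ?_)
      by_cases hz : u 0 i ≠ 0 <;> simp [hz]
    rw [h1, h2] at hcs
    have h3 : ∑ i, |u 0 i| ^ 2 = ∑ i, (u 0 i) ^ 2 :=
      Finset.sum_congr rfl (fun i _ => sq_abs _)
    rw [h3] at hcs
    have h4 : ((l0 (u 0) : ℝ)) ≤ (s : ℝ) := by
      have h5 : l0 (u 0) ≤ s := le_trans hl0u0 hk
      exact_mod_cast h5
    have h5 : b 0 ^ 2 ≤ (s : ℝ) * (a 0) ^ 2 := by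
      rw [ha0sq]
      exact le_trans hcs (mul_le_mul_of_nonneg_right h4 hu0nn)
    calc b 0 = Real.sqrt (b 0 ^ 2) := by rw [Real.sqrt_sq (hbnn 0)]
      _ ≤ Real.sqrt ((s : ℝ) * a 0 ^ 2) := Real.sqrt_le_sqrt h5
      _ = Real.sqrt s * a 0 := by
          rw [Real.sqrt_mul (by positivity) _, Real.sqrt_sq (hann 0)]
  rw [← hb0, ← hcompl]
  set B := ∑ j ∈ Finset.Icc 1 N, b j with hBdef
  have hBnn : 0 ≤ B := Finset.sum_nonneg (fun j _ => hbnn j)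
  have hSA : Real.sqrt s * A2 ≤ B := by
    have h6 := hA2
    rw [le_div_iff₀ hsq] at h6
    linarith [h6]
  rcases eq_or_lt_of_le hWnn with hW0 | hWpos
  · have hwn0 : wn = 0 := by rw [hwndef, ← hW0, Real.sqrt_zero]
    have ha00 : a 0 = 0 := le_antisymm (hwn0 ▸ ha0w) (hann 0)
    have hb00 : b 0 ≤ 0 := by
      have h7 := hb0a
      rw [ha00, mul_zero] at h7
      exact h7
    have hρ : 0 ≤ Real.sqrt 2 * δ / (1 - δ) :=
      div_nonneg (mul_nonneg (Real.sqrt_nonneg 2) hδ0) (le_of_lt hδ1')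
    nlinarith
  · have hwnpos : 0 < wn := Real.sqrt_pos.mpr hWpos
    have hkey : (1 - δ) * (wn * wn) ≤ Real.sqrt 2 * δ * A2 * wn := by
      have h6 : δ * (a 0 + a 1) * A2 ≤ δ * (Real.sqrt 2 * wn) * A2 := by
        apply mul_le_mul_of_nonneg_right _ hA2nn
        exact mul_le_mul_of_nonneg_left ha01 hδ0
      have h7 : (1 - δ) * W ≤ δ * (a 0 + a 1) * A2 := le_trans hlow hchain
      have h8 : W = wn * wn := by rw [← hwnsq]; ring
      calc (1 - δ) * (wn * wn) = (1 - δ) * W := by rw [h8]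
        _ ≤ δ * (Real.sqrt 2 * wn) * A2 := le_trans h7 h6
        _ = Real.sqrt 2 * δ * A2 * wn := by ring
    have hcancel : (1 - δ) * wn ≤ Real.sqrt 2 * δ * A2 := by
      nlinarith [hkey, hwnpos]
    rw [div_mul_eq_mul_div, le_div_iff₀ hδ1']
    have hf1 : b 0 ≤ Real.sqrt s * wn :=
      le_trans hb0a (mul_le_mul_of_nonneg_left ha0w (Real.sqrt_nonneg s))
    have hf0 : b 0 * (1 - δ) ≤ Real.sqrt s * wn * (1 - δ) :=
      mul_le_mul_of_nonneg_right hf1 (le_of_lt hδ1')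
    have hf2 : Real.sqrt s * ((1 - δ) * wn) ≤ Real.sqrt s * (Real.sqrt 2 * δ * A2) :=
      mul_le_mul_of_nonneg_left hcancel (Real.sqrt_nonneg s)
    have hf3 : Real.sqrt 2 * δ * (Real.sqrt s * A2) ≤ Real.sqrt 2 * δ * B :=
      mul_le_mul_of_nonneg_left hSA (mul_nonneg (Real.sqrt_nonneg 2) hδ0)
    nlinarith [hf0, hf2, hf3]

theorem stmt_9 {P N : ℕ} (φ : Matrix (Fin P) (Fin N) ℝ) (s : ℕ) (δ : ℝ)
    (hδ0 : 0 ≤ δ) (hδ : δ < Real.sqrt 2 - 1)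
    (hRIP : ∀ z : Fin N → ℝ, l0 z ≤ 2 * s →
      (1 - δ) * (∑ i, (z i) ^ 2) ≤ (∑ i, (φ.mulVec z i) ^ 2) ∧
      (∑ i, (φ.mulVec z i) ^ 2) ≤ (1 + δ) * (∑ i, (z i) ^ 2))
    (x : Fin N → ℝ) (hx : l0 x ≤ s) :
    (∀ z : Fin N → ℝ, φ.mulVec z = φ.mulVec x → ∑ i, |x i| ≤ ∑ i, |z i|) ∧
    (∀ z : Fin N → ℝ, φ.mulVec z = φ.mulVec x → (∑ i, |z i|) ≤ (∑ i, |x i|) → z = x) := by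
  classical
  have hs2 : (1:ℝ) < Real.sqrt 2 := by
    have h1 : Real.sqrt 1 < Real.sqrt 2 := Real.sqrt_lt_sqrt (by norm_num) (by norm_num)
    simpa using h1
  have hs3 : Real.sqrt 2 < 2 := by
    nlinarith [Real.sq_sqrt (show (0:ℝ) ≤ 2 by norm_num), Real.sqrt_nonneg 2]
  have hδ1 : δ < 1 := by linarith
  rcases Nat.eq_zero_or_pos s with rfl | hs
  · have hx0 : ∀ i, x i = 0 := by
      intro i
      by_contra hxi
      have h1 : 0 < l0 x := by
        rw [l0_eq]
        refine Finset.card_pos.mpr ⟨i, ?_⟩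
        simp [hxi]
      omega
    have hxsum : ∑ i, |x i| = 0 := by simp [hx0]
    constructor
    · intro z _
      rw [hxsum]
      positivity
    · intro z _ hle
      rw [hxsum] at hle
      have hz0 : ∀ i, z i = 0 := by
        intro i
        have h2 : ∑ i, |z i| = 0 :=
          le_antisymm hle (Finset.sum_nonneg (fun i _ => abs_nonneg _))
        have h3 := (Finset.sum_eq_zero_iff_of_nonneg
          (fun i _ => abs_nonneg (z i))).mp h2 i (Finset.mem_univ i)
        exact abs_eq_zero.mp h3
      funext i
      rw [hz0 i, hx0 i]
  · set ρ := Real.sqrt 2 * δ / (1 - δ) with hρdef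
    have hδ1' : 0 < 1 - δ := by linarith
    have hρ1 : ρ < 1 := by
      rw [hρdef, div_lt_one hδ1']
      nlinarith [Real.sq_sqrt (by norm_num : (0:ℝ) ≤ 2), Real.sqrt_nonneg 2, hδ]
    have hρ0 : 0 ≤ ρ :=
      div_nonneg (mul_nonneg (Real.sqrt_nonneg 2) hδ0) (le_of_lt hδ1')
    have hmain : ∀ z : Fin N → ℝ, φ.mulVec z = φ.mulVec x →
        ∑ i, |x i| + (1 - ρ) * (∑ i ∈ Finset.univ.filter (fun i => x i = 0), |z i - x i|)
          ≤ ∑ i, |z i| := by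
      intro z hz
      have hker : φ.mulVec (z - x) = 0 := by
        rw [Matrix.mulVec_sub, hz, sub_self]
      have hk := rip_key φ s δ hδ0 hδ1 hs hRIP x hx (z - x) hker
      simp only [Pi.sub_apply] at hk
      have hsx : ∑ i, |x i| = ∑ i ∈ Finset.univ.filter (fun i => x i ≠ 0), |x i| := by
        rw [Finset.sum_filter]
        refine Finset.sum_congr rfl (fun i _ => ?_)
        by_cases hxi : x i = 0 <;> simp [hxi]
      have hsz : ∑ i, |z i| = (∑ i ∈ Finset.univ.filter (fun i => x i ≠ 0), |z i|)
          + ∑ i ∈ Finset.univ.filter (fun i => x i = 0), |z i| := by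
        rw [← Finset.sum_filter_add_sum_filter_not Finset.univ (fun i => x i ≠ 0)]
        congr 1
        apply Finset.sum_congr (Finset.filter_congr (fun i _ => by simp)) (fun _ _ => rfl)
      have hzc : ∑ i ∈ Finset.univ.filter (fun i => x i = 0), |z i|
          = ∑ i ∈ Finset.univ.filter (fun i => x i = 0), |z i - x i| := by
        refine Finset.sum_congr rfl (fun i hi => ?_)
        simp only [Finset.mem_filter] at hi
        rw [hi.2, sub_zero]
      have htr : ∀ i, |x i| - |z i - x i| ≤ |z i| := by
        intro i
        have h1 : |x i| ≤ |z i| + |z i - x i| := by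
          have h2 : |x i| = |z i - (z i - x i)| := by congr 1; ring
          rw [h2]
          exact abs_sub _ _
        linarith
      have hTz : (∑ i ∈ Finset.univ.filter (fun i => x i ≠ 0), |x i|)
          - (∑ i ∈ Finset.univ.filter (fun i => x i ≠ 0), |z i - x i|)
          ≤ ∑ i ∈ Finset.univ.filter (fun i => x i ≠ 0), |z i| := by
        rw [← Finset.sum_sub_distrib]
        exact Finset.sum_le_sum (fun i _ => htr i)
      linarith [hk, hsz, hzc, hTz, hsx]
    constructor
    · intro z hz
      have h1 := hmain z hz
      have hC : 0 ≤ ∑ i ∈ Finset.univ.filter (fun i => x i = 0), |z i - x i| :=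
        Finset.sum_nonneg (fun i _ => abs_nonneg _)
      nlinarith [h1, hC, hρ1]
    · intro z hz hle
      have h1 := hmain z hz
      have hC : 0 ≤ ∑ i ∈ Finset.univ.filter (fun i => x i = 0), |z i - x i| :=
        Finset.sum_nonneg (fun i _ => abs_nonneg _)
      have hC0 : ∑ i ∈ Finset.univ.filter (fun i => x i = 0), |z i - x i| = 0 := by
        nlinarith [h1, hC, hρ1, hle]
      have hzx : ∀ i, x i = 0 → z i - x i = 0 := by
        intro i hxi
        have h2 := (Finset.sum_eq_zero_iff_of_nonneg
          (fun i _ => abs_nonneg (z i - x i))).mp hC0 i (by simp [hxi])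
        exact abs_eq_zero.mp h2
      have hl0h : l0 (z - x) ≤ 2 * s := by
        refine le_trans (l0_le_of_support
          (S := Finset.univ.filter (fun i => x i ≠ 0)) ?_) ?_
        · intro i hi
          simp only [Pi.sub_apply] at hi
          simp only [Finset.mem_filter, Finset.mem_univ, true_and]
          intro hxi
          exact hi (hzx i hxi)
        · rw [← l0_eq]
          omega
      have hker : φ.mulVec (z - x) = 0 := by
        rw [Matrix.mulVec_sub, hz, sub_self]
      have hrip := (hRIP (z - x) hl0h).1
      rw [hker] at hrip
      simp only [Pi.zero_apply, ne_eq, OfNat.ofNat_ne_zero, not_false_eq_true,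
        zero_pow, Finset.sum_const_zero] at hrip
      have hsum0 : ∑ i, ((z - x) i) ^ 2 ≤ 0 := by nlinarith [hrip, hδ1']
      have hnn : 0 ≤ ∑ i, ((z - x) i) ^ 2 :=
        Finset.sum_nonneg (fun i _ => sq_nonneg _)
      have hz0 : ∀ i, (z - x) i = 0 := by
        intro i
        have h3 := (Finset.sum_eq_zero_iff_of_nonneg
          (fun i _ => sq_nonneg ((z - x) i))).mp (le_antisymm hsum0 hnn) i (Finset.mem_univ i)
        exact pow_eq_zero_iff two_ne_zero |>.mp h3
      funext i
      have h4 := hz0 i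
      rw [Pi.sub_apply, sub_eq_zero] at h4
      exact h4
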